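/- Let R be an SG ring, J an SG ideal of R, and M an SG left R-module. Then f^*(M) := M/⟨J·M⟩^SG is an SG left R/J-module under the well-defined action (r+J)·(m + ⟨JM⟩^SG) := r·m + ⟨JM⟩^SG, with semigraduation (f^*(M))_n = (M_n + ⟨JM⟩^SG)/⟨JM⟩^SG. -/

import Mathlib

open Pointwise

namespace SG

/-- A semi-graded ring: an internal direct sum decomposition `R = ⊕ₙ Rₙ` into additive
subgroups with `Rₘ·Rₙ ⊆ ⊕_{k ≤ m+n} R_k` and `1 ∈ R₀`. -/
def IsSGRing {R : Type*} [Ring R] (g : ℤ → AddSubgroup R) : Prop :=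
  DirectSum.IsInternal g ∧
    (∀ m n : ℤ, ∀ a ∈ g m, ∀ b ∈ g n, a * b ∈ ⨆ k ≤ m + n, g k) ∧
    (1 : R) ∈ g 0

/-- A semi-graded module over a semi-graded ring. -/
def IsSGModule {R M : Type*} [Ring R] [AddCommGroup M] [Module R M]
    (gR : ℤ → AddSubgroup R) (gM : ℤ → AddSubgroup M) : Prop :=
  DirectSum.IsInternal gM ∧
    ∀ m n : ℤ, 0 ≤ m → ∀ r ∈ gR m, ∀ x ∈ gM n, r • x ∈ ⨆ k ≤ m + n, gM k

/-- A submodule `P` is a semi-graded submodule when `P = ⊕ₙ (Mₙ ⊓ P)`. -/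
def IsSGSubmodule {R M : Type*} [Ring R] [AddCommGroup M] [Module R M]
    (gM : ℤ → AddSubgroup M) (P : Submodule R M) : Prop :=
  P.toAddSubgroup = ⨆ n : ℤ, (gM n ⊓ P.toAddSubgroup)

/-- `⟨X⟩^SG`: the intersection of all semi-graded submodules containing `X`. -/
def sgSpan {R M : Type*} [Ring R] [AddCommGroup M] [Module R M]
    (gM : ℤ → AddSubgroup M) (X : Set M) : Submodule R M :=
  sInf {P : Submodule R M | IsSGSubmodule gM P ∧ X ⊆ P}

/-- A (left) ideal is two-sided. -/
def IsTwoSided {R : Type*} [Ring R] (I : Ideal R) : Prop :=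
  ∀ x ∈ I, ∀ r : R, x * r ∈ I

/-- `R_{≥t}`: the intersection of all two-sided semi-graded ideals containing `⊕_{k ≥ t} R_k`. -/
def geIdeal {R : Type*} [Ring R] (gR : ℤ → AddSubgroup R) (t : ℕ) : Ideal R :=
  sInf {I : Ideal R | IsSGSubmodule gR I ∧ IsTwoSided I ∧
    ∀ k : ℤ, (t : ℤ) ≤ k → gR k ≤ I.toAddSubgroup}

/-- Powers of a (two-sided) ideal, `I⁰ = R`, `I^{n+1} = I·Iⁿ`. -/
def idealPow {R : Type*} [Ring R] (I : Ideal R) : ℕ → Ideal R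
  | 0 => ⊤
  | n + 1 => Submodule.span R ((I : Set R) * (idealPow I n : Set R))

/-- `x` is a torsion element: `(R_{≥t})ⁿ • x = 0` for some `n, t ∈ ℕ`. -/
def IsTorsionElem {R : Type*} [Ring R] (gR : ℤ → AddSubgroup R)
    {M : Type*} [AddCommGroup M] [Module R M] (x : M) : Prop :=
  ∃ t n : ℕ, ∀ y ∈ idealPow (geIdeal gR t) n, y • x = 0

/-- `R'_n`. -/
def RprimeN {R : Type*} [Ring R] (gR : ℤ → AddSubgroup R) (n : ℤ) : Set R :=
  {r : R | r ∈ gR n ∧ ∀ m : ℤ, ∀ h ∈ gR m, r * h ∈ gR (n + m)}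

/-- `R' = ⋃ₙ R'_n`. -/
def Rprime {R : Type*} [Ring R] (gR : ℤ → AddSubgroup R) : Set R :=
  ⋃ n : ℤ, RprimeN gR n

/-- `R''_n`. -/
def RdprimeN {R : Type*} [Ring R] (gR : ℤ → AddSubgroup R) (n : ℤ) : Set R :=
  {r : R | r ∈ RprimeN gR n ∧ ∀ m : ℤ, ∀ h ∈ gR m, h * r ∈ gR (n + m)}

/-- `R'' = ⋃ₙ R''_n`. -/
def Rdprime {R : Type*} [Ring R] (gR : ℤ → AddSubgroup R) : Set R :=
  ⋃ n : ℤ, RdprimeN gR n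

/-- A multiplicatively closed set satisfying the left Ore condition. -/
def IsLeftOreSet {R : Type*} [Ring R] (T : Set R) : Prop :=
  (1 : R) ∈ T ∧ (∀ a ∈ T, ∀ b ∈ T, a * b ∈ T) ∧
    ∀ r : R, ∀ s ∈ T, ∃ r' : R, ∃ s' ∈ T, s' * r = r' * s

/-- A good left Ore set. -/
def IsGoodOre {R : Type*} [Ring R] (gR : ℤ → AddSubgroup R) (T : Set R) : Prop :=
  IsLeftOreSet T ∧ T ⊆ Rdprime gR ∧
    ∀ s ∈ T, ∀ r ∈ Rprime gR, ∃ u ∈ Rprime gR, ∃ v ∈ T, u * s = v * r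

/-- A (left) schematic semi-graded ring: positively semi-graded, left Noetherian, with a
finite family of non-trivial good left Ore sets satisfying the schematic condition. -/
def IsSchematic {R : Type*} [Ring R] (gR : ℤ → AddSubgroup R) : Prop :=
  IsSGRing gR ∧ (∀ n : ℤ, n < 0 → gR n = ⊥) ∧ IsNoetherian R R ∧
    ∃ 𝒮 : Set (Set R), 𝒮.Finite ∧
      (∀ T ∈ 𝒮, IsGoodOre gR T ∧ ∃ x ∈ T, x ∈ ⨆ k ≥ (1 : ℤ), gR k) ∧
      ∀ xf : Set R → R, (∀ T ∈ 𝒮, xf T ∈ T) →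
        ∃ t m : ℕ, (idealPow (geIdeal gR t) m : Set R) ⊆
          ↑(⨆ T ∈ 𝒮, Ideal.span {xf T})

/-- `f^!(M)`: the largest semi-graded submodule of `M` annihilated by `J`, realized as the
sum of all semi-graded submodules annihilated by `J`. -/
def fShriek {R M : Type*} [Ring R] [AddCommGroup M] [Module R M]
    (gM : ℤ → AddSubgroup M) (J : Ideal R) : Submodule R M :=
  sSup {P : Submodule R M | IsSGSubmodule gM P ∧ ∀ j ∈ J, ∀ x ∈ P, j • x = 0}

/-- The induced semigraduation on a quotient module. -/
def quotGrade {R M : Type*} [Ring R] [AddCommGroup M] [Module R M]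
    (gM : ℤ → AddSubgroup M) (K : Submodule R M) : ℤ → AddSubgroup (M ⧸ K) :=
  fun n => (gM n).map (K.mkQ : M →ₗ[R] M ⧸ K).toAddMonoidHom

/-- Condition (*) on an ideal `J`. -/
def CondStar {R : Type*} [Ring R] (gR : ℤ → AddSubgroup R) (J : Ideal R) : Prop :=
  ∀ n t : ℕ, ∀ x ∈ J ⊓ idealPow (geIdeal gR t) n,
    ∃ nx tx : ℕ, ∀ y ∈ idealPow (geIdeal gR tx) nx,
      y * x ∈ Submodule.span R ((J : Set R) * (idealPow (geIdeal gR t) n : Set R))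

/-- Localizable semi-graded module: `R'_n · M_m ⊆ M_{n+m}`. -/
def IsLSG {R M : Type*} [Ring R] [AddCommGroup M] [Module R M]
    (gR : ℤ → AddSubgroup R) (gM : ℤ → AddSubgroup M) : Prop :=
  IsSGModule gR gM ∧
    ∀ n m : ℤ, ∀ r ∈ RprimeN gR n, ∀ x ∈ gM m, r • x ∈ gM (n + m)

universe v

/-- `E` is T-injective (in the category of all modules): maps into `E` from a submodule with
torsion quotient extend. -/
def TInjective {R : Type*} [Ring R] (gR : ℤ → AddSubgroup R)
    (E : Type*) [AddCommGroup E] [Module R E] : Prop :=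
  ∀ (M : Type v) [AddCommGroup M] [Module R M] (P : Submodule R M),
    (∀ x : M ⧸ P, IsTorsionElem gR x) →
      ∀ f : P →ₗ[R] E, ∃ g : M →ₗ[R] E, ∀ x : P, g (x : M) = f x

/-- `E` is T-injective within the category of LSG modules and homogeneous maps. -/
def TInjectiveLSG {R : Type*} [Ring R] (gR : ℤ → AddSubgroup R)
    {E : Type*} [AddCommGroup E] [Module R E] (gE : ℤ → AddSubgroup E) : Prop :=
  ∀ (M : Type v) [AddCommGroup M] [Module R M] (gM : ℤ → AddSubgroup M),
    IsLSG gR gM →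
    ∀ P : Submodule R M, IsSGSubmodule gM P →
      (∀ x : M ⧸ P, IsTorsionElem gR x) →
      ∀ f : P →ₗ[R] E, (∀ n : ℤ, ∀ x : P, (x : M) ∈ gM n → f x ∈ gE n) →
        ∃ g : M →ₗ[R] E, (∀ x : P, g (x : M) = f x) ∧
          ∀ n : ℤ, ∀ x ∈ gM n, g x ∈ gE n

end SG


open Pointwise DirectSum

set_option synthInstance.maxHeartbeats 1000000
set_option maxHeartbeats 1000000

namespace SGAux

variable {M : Type*} [AddCommGroup M] (gM : ℤ → AddSubgroup M)

/-- Decomposition map for an internal direct sum of additive subgroups. -/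
noncomputable def dec (h : DirectSum.IsInternal gM) : M ≃+ ⨁ n, gM n :=
  (AddEquiv.ofBijective (DirectSum.coeAddMonoidHom gM) h).symm

lemma sum_dec (h : DirectSum.IsInternal gM) (x : M) :
    DirectSum.coeAddMonoidHom gM (dec gM h x) = x :=
  (AddEquiv.ofBijective (DirectSum.coeAddMonoidHom gM) h).apply_symm_apply x

lemma dec_unique (h : DirectSum.IsInternal gM) (x : M) (f : ⨁ n, gM n)
    (hf : DirectSum.coeAddMonoidHom gM f = x) : dec gM h x = f := by
  apply h.1
  rw [sum_dec gM h x, hf]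

lemma components_mem (h : DirectSum.IsInternal gM) {H : ℤ → AddSubgroup M}
    (hH : ∀ n, H n ≤ gM n) {x : M} (hx : x ∈ ⨆ n, H n) (n : ℤ) :
    ((dec gM h x n : M)) ∈ H n := by
  classical
  refine AddSubgroup.iSup_induction (C := fun x => ((dec gM h x n : M)) ∈ H n) H hx
    (fun i y hy => ?_) ?_ (fun a b ha hb => ?_)
  · show ((dec gM h y n : M)) ∈ H n
    have : dec gM h y = DirectSum.of (fun n => gM n) i ⟨y, hH i hy⟩ :=
      dec_unique gM h y _ (DirectSum.coeAddMonoidHom_of _ _ _)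
    rw [this]
    by_cases hni : i = n
    · subst hni; rw [DirectSum.of_eq_same]; exact hy
    · rw [DirectSum.of_eq_of_ne _ _ _ (Ne.symm hni)]; simpa using (H n).zero_mem
  · show ((dec gM h 0 n : M)) ∈ H n
    rw [map_zero]; simpa using (H n).zero_mem
  · show ((dec gM h (a + b) n : M)) ∈ H n
    rw [map_add]; exact (H n).add_mem ha hb

lemma mem_iSup_of_components (h : DirectSum.IsInternal gM) {H : ℤ → AddSubgroup M}
    {x : M} (hx : ∀ n, ((dec gM h x n : M)) ∈ H n) : x ∈ ⨆ n, H n := by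
  classical
  have hsum : (∑ i ∈ (dec gM h x).support,
      ((dec gM h x) i : M)) = x := by
    conv_rhs => rw [← sum_dec gM h x, ← DirectSum.sum_support_of (dec gM h x)]
    rw [map_sum]
    exact Finset.sum_congr rfl fun i _ => (DirectSum.coeAddMonoidHom_of _ _ _).symm
  rw [← hsum]
  exact AddSubgroup.sum_mem _ fun i _ => AddSubgroup.mem_iSup_of_mem i (hx i)

variable {R : Type*} [Ring R] [Module R M]

lemma subset_sgSpan (X : Set M) : X ⊆ (SG.sgSpan (R := R) gM X : Set M) :=
  fun x hx => Submodule.mem_sInf.2 fun _ hP => hP.2 hx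

lemma sgSpan_isSG (h : DirectSum.IsInternal gM) (X : Set M) :
    SG.IsSGSubmodule gM (SG.sgSpan (R := R) gM X) := by
  set K := SG.sgSpan (R := R) gM X
  refine le_antisymm ?_ (iSup_le fun n => inf_le_right)
  intro x hx
  refine mem_iSup_of_components gM h fun n => ?_
  refine AddSubgroup.mem_inf.2 ⟨(dec gM h x n).2, ?_⟩
  have hxK : x ∈ K := hx
  refine Submodule.mem_sInf.2 fun P hP => ?_
  have hxP : x ∈ ⨆ n, (gM n ⊓ P.toAddSubgroup) := by
    rw [← hP.1]; exact Submodule.mem_sInf.1 hxK P hP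
  exact (components_mem gM h (fun n => inf_le_left) hxP n).2

lemma quot_internal (h : DirectSum.IsInternal gM) (K : Submodule R M)
    (hK : SG.IsSGSubmodule gM K) :
    DirectSum.IsInternal (SG.quotGrade (R := R) gM K) := by
  classical
  constructor
  · -- injective
    rw [injective_iff_map_eq_zero]
    intro f hf
    -- choose preimages
    have hchoice : ∀ n : ℤ, ∃ x : M, x ∈ gM n ∧
        Submodule.Quotient.mk x = ((f n : M ⧸ K)) := by
      intro n
      obtain ⟨x, hx, hx'⟩ := (f n).2
      exact ⟨x, hx, hx'⟩
    choose xv hxv hxv' using hchoice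
    set s : M := ∑ n ∈ f.support, xv n with hs
    have hsK : s ∈ K := by
      have : Submodule.Quotient.mk s = (0 : M ⧸ K) := by
        rw [hs]
        simp only [← Submodule.mkQ_apply, map_sum]
        simp only [Submodule.mkQ_apply]
        have : ∑ n ∈ f.support, (Submodule.Quotient.mk (xv n) : M ⧸ K)
            = ∑ n ∈ f.support, ((f n : M ⧸ K)) :=
          Finset.sum_congr rfl fun n _ => hxv' n
        rw [this]
        calc ∑ n ∈ f.support, ((f n : M ⧸ K))
            = DirectSum.coeAddMonoidHom (SG.quotGrade (R := R) gM K) f := by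
              conv_rhs => rw [← DirectSum.sum_support_of f]
              rw [map_sum]
              exact (Finset.sum_congr rfl fun i _ =>
                (DirectSum.coeAddMonoidHom_of _ _ _).symm)
          _ = 0 := hf
      rwa [← Submodule.Quotient.mk_eq_zero K]
    have hdec : dec gM h s = ∑ n ∈ f.support, DirectSum.of (fun n => gM n) n ⟨xv n, hxv n⟩ := by
      apply dec_unique
      rw [map_sum]
      exact Finset.sum_congr rfl fun i _ => DirectSum.coeAddMonoidHom_of _ _ _
    refine DFinsupp.ext fun n => ?_
    by_cases hn : n ∈ f.support
    · exfalso
      have hcomp : ((dec gM h s n : M)) ∈ gM n ⊓ K.toAddSubgroup := by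
        have : s ∈ ⨆ n, (gM n ⊓ K.toAddSubgroup) := by rw [← hK]; exact hsK
        exact components_mem gM h (fun n => inf_le_left) this n
      have hval : ((dec gM h s n : M)) = xv n := by
        rw [hdec]
        rw [DFinsupp.finset_sum_apply]
        rw [AddSubmonoidClass.coe_finset_sum]
        rw [Finset.sum_eq_single n]
        · rw [DirectSum.of_eq_same]
        · intro b _ hbn
          rw [DirectSum.of_eq_of_ne _ _ _ (Ne.symm hbn)]; rfl
        · intro hn'; exact absurd hn hn'
      have : xv n ∈ K := by rw [← hval]; exact hcomp.2
      have h0 : ((f n : M ⧸ K)) = 0 := by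
        rw [← hxv' n, Submodule.Quotient.mk_eq_zero]; exact this
      exact (DFinsupp.mem_support_iff.1 hn) (Subtype.ext h0)
    · have := DFinsupp.notMem_support_iff.1 hn
      simp [this]
  · -- surjective
    intro y
    obtain ⟨x, rfl⟩ := Submodule.Quotient.mk_surjective K y
    have hmem : ∀ i : ℤ, Submodule.Quotient.mk ((dec gM h x i : M))
        ∈ SG.quotGrade (R := R) gM K i :=
      fun i => AddSubgroup.mem_map.2 ⟨_, (dec gM h x i).2, rfl⟩
    refine ⟨∑ n ∈ (dec gM h x).support,
      DirectSum.of (fun n => SG.quotGrade (R := R) gM K n) n ⟨_, hmem n⟩, ?_⟩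
    rw [map_sum]
    calc ∑ i ∈ (dec gM h x).support,
        DirectSum.coeAddMonoidHom (SG.quotGrade (R := R) gM K)
          (DirectSum.of (fun n => SG.quotGrade (R := R) gM K n) i ⟨_, hmem i⟩)
        = ∑ i ∈ (dec gM h x).support,
            (Submodule.Quotient.mk ((dec gM h x i : M)) : M ⧸ K) :=
          Finset.sum_congr rfl fun i _ => DirectSum.coeAddMonoidHom_of _ _ _
      _ = Submodule.Quotient.mk x := by
          simp only [← Submodule.mkQ_apply, ← map_sum]
          congr 1
          conv_rhs => rw [← sum_dec gM h x, ← DirectSum.sum_support_of (dec gM h x)]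
          rw [map_sum]
          exact Finset.sum_congr rfl fun i _ => (DirectSum.coeAddMonoidHom_of _ _ _).symm

end SGAux

/-- `f^*(M) = M/⟨J·M⟩^SG` is a semi-graded `R/J`-module: the action
`(r+J)·(m+⟨JM⟩^SG) := r·m+⟨JM⟩^SG` is well defined, the induced semigraduation
`(f^*(M))ₙ = (Mₙ + ⟨JM⟩^SG)/⟨JM⟩^SG` is an internal direct sum, and the semi-graded
module condition holds.  `R/J` is modelled by a surjective ring homomorphism `π : R → S`
with kernel `J` and quotient semigraduation `gS`. -/
theorem stmt_11 {R S M : Type*} [Ring R] [Ring S] [AddCommGroup M] [Module R M]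
    (gR : ℤ → AddSubgroup R) (gS : ℤ → AddSubgroup S) (gM : ℤ → AddSubgroup M)
    (hR : SG.IsSGRing gR) (π : R →+* S) (hπ : Function.Surjective π)
    (hgS : ∀ n : ℤ, gS n = (gR n).map π.toAddMonoidHom)
    (J : Ideal R) (hJ : J = RingHom.ker π) (hJsg : SG.IsSGSubmodule gR J)
    (hM : SG.IsSGModule gR gM) :
    (∀ r r' : R, π r = π r' → ∀ m : M,
      (Submodule.Quotient.mk (r • m) :
          M ⧸ SG.sgSpan (R := R) gM ((J : Set R) • (Set.univ : Set M))) =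
        Submodule.Quotient.mk (r' • m)) ∧
    DirectSum.IsInternal (SG.quotGrade (R := R) gM
      (SG.sgSpan (R := R) gM ((J : Set R) • (Set.univ : Set M)))) ∧
    (∀ a : ℤ, 0 ≤ a → ∀ b : ℤ, ∀ r : R, π r ∈ gS a →
      ∀ y ∈ SG.quotGrade (R := R) gM
          (SG.sgSpan (R := R) gM ((J : Set R) • (Set.univ : Set M))) b,
        r • y ∈ ⨆ c ≤ a + b, SG.quotGrade (R := R) gM
          (SG.sgSpan (R := R) gM ((J : Set R) • (Set.univ : Set M))) c) := by
    classical
  set K := SG.sgSpan (R := R) gM ((J : Set R) • (Set.univ : Set M)) with hKdef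
  have hKsg : SG.IsSGSubmodule gM K := SGAux.sgSpan_isSG gM hM.1 _
  have hJM : ∀ j ∈ J, ∀ m : M, j • m ∈ K := fun j hj m =>
    SGAux.subset_sgSpan gM _ (Set.smul_mem_smul hj (Set.mem_univ m))
  have hwd : ∀ r r' : R, π r = π r' → ∀ m : M,
      (Submodule.Quotient.mk (r • m) : M ⧸ K) = Submodule.Quotient.mk (r' • m) := by
    intro r r' hrr m
    rw [Submodule.Quotient.eq]
    have hmem : r - r' ∈ J := by
      rw [hJ, RingHom.mem_ker, map_sub, hrr, sub_self]
    have := hJM _ hmem m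
    rwa [sub_smul] at this
  refine ⟨hwd, SGAux.quot_internal gM hM.1 K hKsg, ?_⟩
  intro a ha b r hr y hy
  obtain ⟨x, hx, rfl⟩ := AddSubgroup.mem_map.1 hy
  rw [hgS] at hr
  obtain ⟨r₀, hr₀, hr₀eq⟩ := AddSubgroup.mem_map.1 hr
  have hstep : r • ((K.mkQ : M →ₗ[R] M ⧸ K).toAddMonoidHom x)
      = (K.mkQ : M →ₗ[R] M ⧸ K).toAddMonoidHom (r₀ • x) := by
    show r • (Submodule.Quotient.mk x : M ⧸ K) = Submodule.Quotient.mk (r₀ • x)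
    rw [← Submodule.Quotient.mk_smul]
    exact hwd r r₀ hr₀eq.symm x
  rw [hstep]
  have hmem : r₀ • x ∈ ⨆ k, ⨆ _ : k ≤ a + b, gM k := hM.2 a b ha r₀ hr₀ x hx
  have himg := AddSubgroup.mem_map_of_mem
    ((K.mkQ : M →ₗ[R] M ⧸ K).toAddMonoidHom) hmem
  rw [AddSubgroup.map_iSup] at himg
  have hle : (⨆ k, AddSubgroup.map (K.mkQ : M →ₗ[R] M ⧸ K).toAddMonoidHom
      (⨆ _ : k ≤ a + b, gM k))
      ≤ ⨆ c, ⨆ _ : c ≤ a + b, SG.quotGrade (R := R) gM K c := by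
    refine iSup_le fun k => ?_
    rw [AddSubgroup.map_iSup]
    exact iSup_le fun hk =>
      le_iSup₂ (f := fun c (_ : c ≤ a + b) => SG.quotGrade (R := R) gM K c) k hk
  exact hle himg
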